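/- Let A = (A,·,∘) be a skew brace and suppose a ∈ A is u-distributive, i.e., (b·c) ∘ a = (b∘a) · a⁻¹ · (c∘a) holds for all b,c ∈ A, and suppose a is not in the center of the group (A,∘). Then the map ι_a : A → A, ι_a(b) = ā ∘ b ∘ a, is a non-identity element of Aut(A); in particular Aut(A) is non-trivial. -/

import Mathlib

/-- A skew brace structure on a group `A` (whose given group operation `*` plays the
role of the "additive" operation `·`): a second group operation `circ` with the same
identity element `1`, satisfying the brace relation
`a ∘ (b · c) = (a ∘ b) · a⁻¹ · (a ∘ c)`. -/
structure SkewBraceStruct (A : Type*) [Group A] where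
  circ : A → A → A
  circInv : A → A
  circ_assoc : ∀ a b c, circ (circ a b) c = circ a (circ b c)
  one_circ : ∀ a, circ 1 a = a
  circ_one : ∀ a, circ a 1 = a
  circInv_circ : ∀ a, circ (circInv a) a = 1
  brace : ∀ a b c, circ a (b * c) = circ a b * a⁻¹ * circ a c

/-- `f` is an automorphism of the skew brace: a bijection that is an automorphism of
both `(A, ·)` and `(A, ∘)`. -/
def SkewBraceStruct.IsAut {A : Type*} [Group A] (S : SkewBraceStruct A) (f : A → A) : Prop :=
  Function.Bijective f ∧ (∀ a b, f (a * b) = f a * f b) ∧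
    (∀ a b, f (S.circ a b) = S.circ (f a) (f b))


/-- If `a` is a u-distributive element of a skew brace, i.e.
`(b · c) ∘ a = (b ∘ a) · a⁻¹ · (c ∘ a)` for all `b, c`, and `a` is not central in
`(A, ∘)`, then `ι_a : b ↦ ā ∘ b ∘ a` is a non-identity element of `Aut(A)`; in
particular `Aut(A)` is non-trivial. -/
theorem uDistributive_noncentral_aut_nontrivial {A : Type*} [Group A] (S : SkewBraceStruct A)
    (a : A) (hu : ∀ b c : A, S.circ (b * c) a = S.circ b a * a⁻¹ * S.circ c a)
    (hnc : ∃ b : A, S.circ a b ≠ S.circ b a) :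
    (S.IsAut (fun b => S.circ (S.circ (S.circInv a) b) a) ∧
      (fun b => S.circ (S.circ (S.circInv a) b) a) ≠ id) ∧
    ∃ f : A → A, S.IsAut f ∧ f ≠ id := by

  obtain ⟨b₀, hb₀⟩ := hnc
  have hinv2 : ∀ x : A, S.circInv (S.circInv x) = x := by
    intro x
    have h := S.circ_assoc (S.circInv (S.circInv x)) (S.circInv x) x
    rw [S.circInv_circ, S.circInv_circ, S.one_circ, S.circ_one] at h
    exact h.symm
  have key3 : ∀ x : A, S.circ x (S.circInv x) = 1 := by
    intro x
    have h := S.circInv_circ (S.circInv x)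
    rwa [hinv2] at h
  have key1 : ∀ x : A, S.circ a (S.circ (S.circInv a) x) = x := by
    intro x
    rw [← S.circ_assoc, key3, S.one_circ]
  have key2 : ∀ x : A, S.circ (S.circInv a) (S.circ a x) = x := by
    intro x
    rw [← S.circ_assoc, S.circInv_circ, S.one_circ]
  have h2 : S.circ ((S.circInv a)⁻¹) a = a * a := by
    have h := hu (S.circInv a)⁻¹ (S.circInv a)
    rw [inv_mul_cancel, S.one_circ, S.circInv_circ, mul_one] at h
    exact mul_inv_eq_iff_eq_mul.mp h.symm
  set f : A → A := fun b => S.circ (S.circ (S.circInv a) b) a with hf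
  have hmul : ∀ b c, f (b * c) = f b * f c := by
    intro b c
    show S.circ (S.circ (S.circInv a) (b * c)) a = _
    rw [S.brace, hu, hu, h2]
    group
    rfl
  have hcirc : ∀ x y, f (S.circ x y) = S.circ (f x) (f y) := by
    intro x y
    simp only [hf]
    simp only [S.circ_assoc, key1]
  have hbij : Function.Bijective f := by
    apply Function.bijective_iff_has_inverse.mpr
    refine ⟨fun b => S.circ (S.circ a b) (S.circInv a), ?_, ?_⟩
    · intro b
      simp only [hf, S.circ_assoc, key3, key1, key2, S.circInv_circ, S.circ_one, S.one_circ]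
    · intro b
      simp only [hf, S.circ_assoc, key3, key1, key2, S.circInv_circ, S.circ_one, S.one_circ]
  have hne : f ≠ id := by
    intro h
    have h' : S.circ (S.circ (S.circInv a) b₀) a = b₀ := congrFun h b₀
    have h'' := congrArg (S.circ a) h'
    rw [← S.circ_assoc, key1] at h''
    exact hb₀ h''.symm
  exact ⟨⟨⟨hbij, hmul, hcirc⟩, hne⟩, f, ⟨hbij, hmul, hcirc⟩, hne⟩
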